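/- Let α be a nonnegative random variable taking values in [0,H) (0 < H ≤ ∞) with absolutely continuous distribution function F, continuous density f, survival function F̄ = 1 - F positive on [0,H), and finite mean Eα > c ≥ 0, and let n ≥ 1. Let L(x) := m(x) - c/F̄(x) - x/n and g(x) = x f(x)/F̄(x). If x* ∈ (0,H) satisfies L(x*) = 0 and g(x*) ≤ 1, then L'(x*) = (1/n)·(g(x*) - (n+1)) < 0. -/

import Mathlib

open MeasureTheory Set Filter Function

noncomputable section

/-- The mean residual demand (MRD) function `m(x) = (1/F̄(x)) ∫_x^H F̄(u) du`
(the survival function vanishes beyond `H`, so the integral may be taken over `(x,∞)`). -/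
def mrd (F : ℝ → ℝ) (x : ℝ) : ℝ :=
  (∫ u in Ioi x, (1 - F u)) / (1 - F x)

/-- The function `L(x) = m(x) - c/F̄(x) - x/n`. -/
def Lfun (F : ℝ → ℝ) (c : ℝ) (n : ℕ) (x : ℝ) : ℝ :=
  mrd F x - c / (1 - F x) - x / n

/-- If `x* ∈ (0,H)` satisfies `L(x*) = 0` and `g(x*) ≤ 1`, where
`g(x) = x f(x)/F̄(x)`, then `L'(x*) = (1/n)(g(x*) - (n+1)) < 0`. -/
theorem stmt12 {Ω : Type*} [MeasurableSpace Ω] (μ : Measure Ω) [IsProbabilityMeasure μ]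
    (α : Ω → ℝ) (hαmeas : Measurable α)
    (H : EReal) (hH : 0 < H)
    (hval : ∀ᵐ ω ∂μ, 0 ≤ α ω ∧ (α ω : EReal) < H)
    (hαint : Integrable α μ)
    (F f : ℝ → ℝ)
    (hF : ∀ x : ℝ, F x = (μ {ω | α ω ≤ x}).toReal)
    (hfcont : Continuous f) (hfnonneg : ∀ x, 0 ≤ f x) (hfint : Integrable f)
    (hdens : ∀ x : ℝ, F x = ∫ u in Iic x, f u)
    (hFbar : ∀ x : ℝ, 0 ≤ x → (x : EReal) < H → 0 < 1 - F x)
    (c : ℝ) (hc : 0 ≤ c) (hcE : c < ∫ ω, α ω ∂μ)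
    (n : ℕ) (hn : 1 ≤ n) :
    ∀ xs : ℝ, 0 < xs → (xs : EReal) < H →
      Lfun F c n xs = 0 → xs * f xs / (1 - F xs) ≤ 1 →
        HasDerivAt (Lfun F c n)
          ((1 / (n : ℝ)) * (xs * f xs / (1 - F xs) - ((n : ℝ) + 1))) xs ∧
        (1 / (n : ℝ)) * (xs * f xs / (1 - F xs) - ((n : ℝ) + 1)) < 0 := by
  intro xs hxs hxsH hL0 hg
  have hNpos : (0 : ℝ) < (n : ℝ) := by exact_mod_cast Nat.lt_of_lt_of_le Nat.zero_lt_one hn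
  -- F has derivative f everywhere
  have hFderiv : ∀ y : ℝ, HasDerivAt F (f y) y := by
    intro y
    have key : ∀ x : ℝ, F x = F 0 + ∫ t in (0:ℝ)..x, f t := by
      intro x
      rw [hdens x, hdens 0, ← intervalIntegral.integral_Iic_sub_Iic
        (hfint.integrableOn) (hfint.integrableOn)]
      ring
    have hD : HasDerivAt (fun x => F 0 + ∫ t in (0:ℝ)..x, f t) (f y) y := by
      refine HasDerivAt.const_add _ ?_
      exact intervalIntegral.integral_hasDerivAt_right hfint.intervalIntegrable
        hfcont.stronglyMeasurable.stronglyMeasurableAtFilter hfcont.continuousAt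
    have : F = fun x => F 0 + ∫ t in (0:ℝ)..x, f t := funext key
    rw [this]; exact hD
  have hFcont : Continuous F := by
    rw [continuous_iff_continuousAt]; exact fun y => (hFderiv y).continuousAt
  set Fb : ℝ → ℝ := fun u => 1 - F u with hFbdef
  have hFbcont : Continuous Fb := continuous_const.sub hFcont
  have hFbpos : 0 < Fb xs := hFbar xs hxs.le hxsH
  have hFbne : Fb xs ≠ 0 := ne_of_gt hFbpos
  -- tail representation
  have htail : ∀ u : ℝ, Fb u = (μ {ω | u < α ω}).toReal := by
    intro u
    have hms : MeasurableSet {ω | α ω ≤ u} := hαmeas measurableSet_Iic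
    have h1 : {ω | u < α ω} = {ω | α ω ≤ u}ᶜ := by ext ω; simp [not_le]
    have h2 : μ {ω | α ω ≤ u}ᶜ = 1 - μ {ω | α ω ≤ u} := by
      rw [measure_compl hms (measure_ne_top μ _), measure_univ]
    rw [hFbdef]
    simp only [h1, h2, hF u]
    rw [ENNReal.toReal_sub_of_le prob_le_one ENNReal.one_ne_top, ENNReal.toReal_one]
  -- integrability of the tail function on Ioi (xs/2)
  have hαnn : 0 ≤ᵐ[μ] α := hval.mono fun ω h => h.1
  have htail_meas : Measurable fun t : ℝ => (μ {ω | t < α ω}).toReal := by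
    refine Measurable.ennreal_toReal ?_
    exact Antitone.measurable fun _ _ hst => measure_mono fun _ h => lt_of_le_of_lt hst h
  have hlint : ∫⁻ t in Ioi (0:ℝ), μ {ω | t < α ω} < ⊤ := by
    rw [← lintegral_eq_lintegral_meas_lt μ hαnn hαmeas.aemeasurable]
    exact hαint.lintegral_lt_top
  have htail_int : Integrable (fun t : ℝ => (μ {ω | t < α ω}).toReal)
      (volume.restrict (Ioi (0:ℝ))) := by
    refine ⟨htail_meas.aestronglyMeasurable, ?_⟩
    rw [hasFiniteIntegral_iff_ofReal (Eventually.of_forall fun t => ENNReal.toReal_nonneg)]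
    calc ∫⁻ t in Ioi (0:ℝ), ENNReal.ofReal ((μ {ω | t < α ω}).toReal)
        = ∫⁻ t in Ioi (0:ℝ), μ {ω | t < α ω} :=
          lintegral_congr fun t => ENNReal.ofReal_toReal (measure_ne_top μ _)
      _ < ⊤ := hlint
  have hFbint : IntegrableOn Fb (Ioi (xs/2)) := by
    have h1 : IntegrableOn (fun t : ℝ => (μ {ω | t < α ω}).toReal) (Ioi (xs/2)) :=
      htail_int.mono_measure (Measure.restrict_mono (Ioi_subset_Ioi (by linarith)) le_rfl)
    have : Fb = fun t : ℝ => (μ {ω | t < α ω}).toReal := funext htail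
    rw [this]; exact h1
  -- the integral function G
  set G : ℝ → ℝ := fun x => ∫ u in Ioi x, Fb u with hGdef
  have hGderiv : HasDerivAt G (-(Fb xs)) xs := by
    have hev : G =ᶠ[nhds xs] fun x => G (xs/2) - ∫ t in (xs/2)..x, Fb t := by
      filter_upwards [Ioi_mem_nhds (show xs/2 < xs by linarith)] with x hx
      have hxle : xs/2 ≤ x := le_of_lt hx
      have hsplit : G (xs/2) = (∫ t in Ioc (xs/2) x, Fb t) + G x := by
        rw [hGdef]
        rw [← MeasureTheory.setIntegral_union (Ioc_disjoint_Ioi le_rfl) measurableSet_Ioi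
          (hFbint.mono_set Ioc_subset_Ioi_self) (hFbint.mono_set (Ioi_subset_Ioi hxle)),
          Ioc_union_Ioi_eq_Ioi hxle]
      rw [intervalIntegral.integral_of_le hxle]
      linarith [hsplit]
    have hD : HasDerivAt (fun x => G (xs/2) - ∫ t in (xs/2)..x, Fb t) (-(Fb xs)) xs := by
      refine HasDerivAt.const_sub _ ?_
      exact intervalIntegral.integral_hasDerivAt_right
        (hFbcont.intervalIntegrable _ _)
        hFbcont.stronglyMeasurable.stronglyMeasurableAtFilter hFbcont.continuousAt
    exact hD.congr_of_eventuallyEq hev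
  have hFbderiv : HasDerivAt Fb (-(f xs)) xs := (hFderiv xs).const_sub 1
  -- assemble the derivative of Lfun
  have hLrw : Lfun F c n = fun x => G x / Fb x - c / Fb x - x / n := rfl
  have h1 : HasDerivAt (fun x => G x / Fb x)
      ((-(Fb xs) * Fb xs - G xs * -(f xs)) / Fb xs ^ 2) xs := hGderiv.div hFbderiv hFbne
  have h2 : HasDerivAt (fun x => c / Fb x)
      ((0 * Fb xs - c * -(f xs)) / Fb xs ^ 2) xs := (hasDerivAt_const xs c).div hFbderiv hFbne
  have h3 : HasDerivAt (fun x : ℝ => x / (n:ℝ)) (1 / (n:ℝ)) xs := by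
    simpa using (hasDerivAt_id xs).div_const (n:ℝ)
  have hD : HasDerivAt (Lfun F c n)
      ((-(Fb xs) * Fb xs - G xs * -(f xs)) / Fb xs ^ 2
        - (0 * Fb xs - c * -(f xs)) / Fb xs ^ 2 - 1 / (n:ℝ)) xs := by
    rw [hLrw]; exact (h1.sub h2).sub h3
  -- use L(xs) = 0 to simplify
  have hL0' : G xs / Fb xs - c / Fb xs - xs / (n:ℝ) = 0 := hL0
  have hGc : (G xs - c) * (n:ℝ) = xs * Fb xs := by
    field_simp at hL0'
    linarith [hL0']
  have hDval : (-(Fb xs) * Fb xs - G xs * -(f xs)) / Fb xs ^ 2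
        - (0 * Fb xs - c * -(f xs)) / Fb xs ^ 2 - 1 / (n:ℝ)
      = (1 / (n:ℝ)) * (xs * f xs / Fb xs - ((n:ℝ) + 1)) := by
    have hN : (n:ℝ) ≠ 0 := ne_of_gt hNpos
    field_simp
    simp only [hFbdef] at hGc
    linear_combination (f xs) * hGc
  constructor
  · rw [show xs * f xs / (1 - F xs) = xs * f xs / Fb xs from rfl, ← hDval]; exact hD
  · have h4 : xs * f xs / Fb xs - ((n:ℝ) + 1) ≤ 1 - ((n:ℝ) + 1) := by
      have : xs * f xs / Fb xs ≤ 1 := hg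
      linarith
    have h5 : (1:ℝ) - ((n:ℝ) + 1) = -(n:ℝ) := by ring
    have : xs * f xs / (1 - F xs) - ((n:ℝ) + 1) < 0 := by
      have := hg; simp only [hFbdef] at h4 ⊢
      linarith
    exact mul_neg_of_pos_of_neg (by positivity) this
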